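/- For the n-cycle quiver (a loop with n vertices v₁ → v₂ → ⋯ → vₙ → v₁) and an injective R-module E, the representation X with X(vᵢ) = Eⁿ for all i and X(aᵢ)(x₁,…,xₙ) = (xₙ, x₁, …, x_{n−1}) satisfies: each X(vᵢ) is injective and each map X(vᵢ) → ∏_{s(a)=vᵢ} X(t(a)) is a split epimorphism, yet X is not an injective representation. -/

import Mathlib

open CategoryTheory

/-- The `n`-cycle quiver: vertices `Fin n`, one arrow `i ⟶ i + 1` for each `i`. -/
instance cycleQuiver (n : ℕ) [NeZero n] : Quiver.{0} (Fin n) :=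
  ⟨fun i j => PLift (j = i + 1)⟩

/-- The cyclic shift `(x₁, …, xₙ) ↦ (xₙ, x₁, …, x_{n-1})` on `Eⁿ`. -/
def shiftMap (R : Type) [Ring R] (n : ℕ) [NeZero n] (E : Type) [AddCommGroup E]
    [Module R E] : (Fin n → E) →ₗ[R] (Fin n → E) where
  toFun x := fun j => x (j - 1)
  map_add' _ _ := rfl
  map_smul' _ _ := rfl

/-- The representation of the `n`-cycle quiver with `Eⁿ` at every vertex and the
cyclic shift along every arrow. -/
def cycleRep (R : Type) [Ring R] (n : ℕ) [NeZero n] (E : Type) [AddCommGroup E]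
    [Module R E] : Paths (Fin n) ⥤ ModuleCat.{0,0} R :=
  Paths.lift
    { obj := fun _ => ModuleCat.of R (Fin n → E)
      map := fun _ => ModuleCat.ofHom (shiftMap R n E) }

/-- The map `X(v) → ∏_{s(a) = v} X(t(a))` induced by the arrow maps. -/
def outMap {V : Type} [Quiver.{0} V] {R : Type} [Ring R]
    (X : Paths V ⥤ ModuleCat.{0,0} R) (v : V) :
    X.obj ((Paths.of V).obj v) →ₗ[R] ((a : Σ w : V, v ⟶ w) → X.obj ((Paths.of V).obj a.1)) :=
  LinearMap.pi fun a => (X.map a.2.toPath).hom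

section Aux

open Fin.NatCast

variable (R : Type) [Ring R] (n : ℕ) [NeZero n] (E : Type) [AddCommGroup E] [Module R E]

/-- The inverse cyclic shift. -/
def unshiftMap : (Fin n → E) →ₗ[R] (Fin n → E) where
  toFun x := fun j => x (j + 1)
  map_add' _ _ := rfl
  map_smul' _ _ := rfl

lemma cycleRep_map_apply : ∀ {i j : Fin n} (p : Quiver.Path i j) (x : Fin n → E) (t : Fin n),
    ((cycleRep R n E).map p) x t = x (t - (p.length : Fin n)) := by
  intro i j p
  induction p with
  | nil =>
    intro x t
    have h0 : ((cycleRep R n E).map (Quiver.Path.nil : Quiver.Path i i)) x t = x t := rfl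
    rw [h0]
    simp
  | cons p e ih =>
    intro x t
    have h1 : ((cycleRep R n E).map (p.cons e)) x
        = shiftMap R n E (((cycleRep R n E).map p) x) := by
      rw [show (cycleRep R n E).map (p.cons e)
          = (cycleRep R n E).map p ≫ ModuleCat.ofHom (shiftMap R n E) from
          Paths.lift_cons _ p e]
      rfl
    rw [h1]
    show (((cycleRep R n E).map p) x) (t - 1) = _
    rw [ih]
    congr 1
    simp only [Quiver.Path.length_cons]
    push_cast
    rw [sub_sub, add_comm]

/-- The arrow maps of the doubled representation: the extra term occurs only on the
arrow leaving vertex `0`. -/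
def dmap (i : Fin n) : ((Fin n → E) × (Fin n → E)) →ₗ[R] ((Fin n → E) × (Fin n → E)) :=
  LinearMap.prod
    ((shiftMap R n E) ∘ₗ (LinearMap.fst R _ _) +
      (if i = 0 then (shiftMap R n E) ∘ₗ (LinearMap.snd R _ _) else 0))
    ((shiftMap R n E) ∘ₗ (LinearMap.snd R _ _))

/-- The doubled representation: a self-extension of `cycleRep`. -/
def cycleRep₂ : Paths (Fin n) ⥤ ModuleCat.{0,0} R :=
  Paths.lift
    { obj := fun _ => ModuleCat.of R ((Fin n → E) × (Fin n → E))
      map := fun {i _} _ => ModuleCat.ofHom (dmap R n E i) }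

/-- Number of arrows in a path whose source is the vertex `0`. -/
def cnt (n : ℕ) [NeZero n] : ∀ {i j : Fin n}, Quiver.Path i j → ℕ
  | _, _, Quiver.Path.nil => 0
  | _, _, @Quiver.Path.cons _ _ _ b _ p _ => cnt n p + (if b = (0 : Fin n) then 1 else 0)

lemma cycleRep₂_map_snd : ∀ {i j : Fin n} (p : Quiver.Path i j)
    (z : (Fin n → E) × (Fin n → E)) (t : Fin n),
    (((cycleRep₂ R n E).map p) z).2 t = z.2 (t - (p.length : Fin n)) := by
  intro i j p
  induction p with
  | nil =>
    intro z t
    have h0 : (((cycleRep₂ R n E).map (Quiver.Path.nil : Quiver.Path i i)) z).2 t = z.2 t := rfl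
    rw [h0]
    simp
  | @cons b c p e ih =>
    intro z t
    have h1 : ((cycleRep₂ R n E).map (p.cons e)) z
        = dmap R n E b (((cycleRep₂ R n E).map p) z) := by
      rw [show (cycleRep₂ R n E).map (p.cons e)
          = (cycleRep₂ R n E).map p ≫ ModuleCat.ofHom (dmap R n E b) from
          Paths.lift_cons _ p e]
      rfl
    rw [h1]
    show ((((cycleRep₂ R n E).map p) z).2) (t - 1) = _
    rw [ih]
    congr 1
    simp only [Quiver.Path.length_cons]
    push_cast
    rw [sub_sub, add_comm]

lemma cycleRep₂_map_fst : ∀ {i j : Fin n} (p : Quiver.Path i j)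
    (z : (Fin n → E) × (Fin n → E)) (t : Fin n),
    (((cycleRep₂ R n E).map p) z).1 t
      = z.1 (t - (p.length : Fin n)) + (cnt n p) • z.2 (t - (p.length : Fin n)) := by
  intro i j p
  induction p with
  | nil =>
    intro z t
    have h0 : (((cycleRep₂ R n E).map (Quiver.Path.nil : Quiver.Path i i)) z).1 t = z.1 t := rfl
    rw [h0]
    simp [cnt]
  | @cons b c p e ih =>
    intro z t
    have h1 : ((cycleRep₂ R n E).map (p.cons e)) z
        = dmap R n E b (((cycleRep₂ R n E).map p) z) := by
      rw [show (cycleRep₂ R n E).map (p.cons e)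
          = (cycleRep₂ R n E).map p ≫ ModuleCat.ofHom (dmap R n E b) from
          Paths.lift_cons _ p e]
      rfl
    rw [h1]
    have key : t - (((p.cons e).length : ℕ) : Fin n) = (t - 1) - ((p.length : ℕ) : Fin n) := by
      simp only [Quiver.Path.length_cons]
      push_cast
      rw [sub_sub, add_comm]
    have hcnt : cnt n (p.cons e) = cnt n p + (if b = (0 : Fin n) then 1 else 0) := by
      simp [cnt]
    rw [key, hcnt]
    have hfst := ih z (t - 1)
    have hsnd := cycleRep₂_map_snd R n E p z (t - 1)
    rcases eq_or_ne b 0 with hb | hb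
    · have h2 : (dmap R n E b ((((cycleRep₂ R n E).map p)) z)).1 t
          = (((cycleRep₂ R n E).map p) z).1 (t - 1)
            + (((cycleRep₂ R n E).map p) z).2 (t - 1) := by
        rw [dmap, if_pos hb]; rfl
      rw [h2, hfst, hsnd, if_pos hb, succ_nsmul]
      abel
    · have h2 : (dmap R n E b ((((cycleRep₂ R n E).map p)) z)).1 t
          = (((cycleRep₂ R n E).map p) z).1 (t - 1) := by
        rw [dmap, if_neg hb, add_zero]; rfl
      rw [h2, hfst, if_neg hb]
      simp

lemma exists_path_k (n : ℕ) [NeZero n] :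
    ∀ (k : ℕ), k ≤ n → ∀ (j : Fin n), j = (k : Fin n) →
    ∃ p : Quiver.Path (0 : Fin n) j, p.length = k ∧ cnt n p = (if k = 0 then 0 else 1) := by
  intro k
  induction k with
  | zero =>
    intro _ j hj
    have hj' : j = 0 := by simpa using hj
    subst hj'
    exact ⟨Quiver.Path.nil, rfl, by simp [cnt]⟩
  | succ k ih =>
    intro hk j hj
    obtain ⟨p, hl, hc⟩ := ih (Nat.le_of_succ_le hk) (k : Fin n) rfl
    have he : j = (k : Fin n) + 1 := by rw [hj]; push_cast; ring
    refine ⟨p.cons ⟨he⟩, by simp [hl], ?_⟩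
    have hstep : cnt n (p.cons ⟨he⟩) = cnt n p + (if (k : Fin n) = (0 : Fin n) then 1 else 0) := by
      simp [cnt]
    rw [hstep, hc]
    rcases Nat.eq_zero_or_pos k with hk0 | hk0
    · subst hk0; simp
    · have hkn : k < n := lt_of_lt_of_le (Nat.lt_succ_self k) hk
      have h1 : ((k : ℕ) : Fin n) ≠ 0 := by
        intro h
        have h2 := congrArg Fin.val h
        rw [Fin.val_natCast, Fin.val_zero, Nat.mod_eq_of_lt hkn] at h2
        exact hk0.ne' h2
      simp [h1, hk0.ne']

/-- Monos are componentwise: the inclusion is compatible with all path maps. -/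
lemma incl_nat {i j : Fin n} (p : Quiver.Path i j) (x : Fin n → E) :
    ((cycleRep₂ R n E).map p) ((x, 0) : (Fin n → E) × (Fin n → E))
      = ((((cycleRep R n E).map p) x, 0) : (Fin n → E) × (Fin n → E)) := by
  have hfx := cycleRep_map_apply R n E p x
  refine Prod.ext (funext fun t => ?_) (funext fun t => ?_)
  · rw [cycleRep₂_map_fst R n E p _ t]
    simp [hfx]
  · rw [cycleRep₂_map_snd R n E p _ t]
    simp

/-- The inclusion of `cycleRep` into the doubled representation. -/
def incl : cycleRep R n E ⟶ cycleRep₂ R n E where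
  app _ := ModuleCat.ofHom (LinearMap.inl R (Fin n → E) (Fin n → E))
  naturality := by
    intro i j p
    refine ModuleCat.hom_ext (LinearMap.ext fun x => ?_)
    exact (incl_nat R n E p x).symm

lemma pi_injective (hE : Module.Injective R E) : Module.Injective R (Fin n → E) := by
  constructor
  intro X Y _ _ _ _ f hf g
  choose h hh using fun i : Fin n => hE.out f hf ((LinearMap.proj i) ∘ₗ g)
  exact ⟨LinearMap.pi h, fun x => funext fun i => hh i x⟩

end Aux

/-- For the `n`-cycle quiver and a (nonzero) injective `R`-module
`E`, the cyclic-shift representation `X` with `X(vᵢ) = Eⁿ` satisfies: each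
`X(vᵢ)` is an injective module and each induced map
`X(vᵢ) → ∏_{s(a)=vᵢ} X(t(a))` is a split epimorphism, yet `X` is not an
injective representation. -/
theorem stmt7 (R : Type) [Ring R] (n : ℕ) [NeZero n] (E : Type) [AddCommGroup E]
    [Module R E] (hE : Module.Injective R E) (hnt : Nontrivial E) :
    (∀ i : Fin n, Module.Injective R ((cycleRep R n E).obj ((Paths.of (Fin n)).obj i))) ∧
    (∀ i : Fin n, ∃ s, (outMap (cycleRep R n E) i) ∘ₗ s = LinearMap.id) ∧
    ¬ Injective (cycleRep R n E) := by
  refine ⟨fun i => pi_injective R n E hE, fun i => ?_, ?_⟩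
  · -- split epimorphism
    refine ⟨(unshiftMap R n E) ∘ₗ (LinearMap.proj ⟨i + 1, ⟨rfl⟩⟩), ?_⟩
    refine LinearMap.ext fun f => funext fun a => ?_
    obtain ⟨w, e⟩ := a
    obtain ⟨hw⟩ := e
    subst hw
    simp only [outMap, LinearMap.pi_apply, LinearMap.coe_comp, Function.comp_apply,
      LinearMap.proj_apply, LinearMap.id_apply]
    funext t
    show f ⟨i + 1, ⟨rfl⟩⟩ (t - 1 + 1) = f ⟨i + 1, ⟨rfl⟩⟩ t
    rw [sub_add_cancel]
  · -- not injective
    intro hInj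
    haveI : ∀ v : Paths (Fin n), Mono ((incl R n E).app v) := by
      intro v
      rw [ModuleCat.mono_iff_injective]
      exact LinearMap.inl_injective (R := R) (M := Fin n → E) (M₂ := Fin n → E)
    haveI : Mono (incl R n E) := NatTrans.mono_of_mono_app _
    obtain ⟨h, hh⟩ := hInj.factors (𝟙 (cycleRep R n E)) (incl R n E)
    obtain ⟨y, hy⟩ := exists_ne (0 : E)
    obtain ⟨p, hl, hc⟩ := exists_path_k n n le_rfl 0 (Fin.natCast_self n).symm
    have hc1 : cnt n p = 1 := by
      rw [hc, if_neg (NeZero.ne n)]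
    let v₀ : Paths (Fin n) := (0 : Fin n)
    have hnat := h.naturality (show v₀ ⟶ v₀ from p)
    set Y : Fin n → E := fun _ => y with hY
    -- compute the two functor maps on the cycle path
    have hmap₂ : ((cycleRep₂ R n E).map p) ((0 : Fin n → E), Y) = (Y, Y) := by
      open Fin.NatCast in have hln : ((p.length : ℕ) : Fin n) = 0 := by rw [hl, Fin.natCast_self]
      refine Prod.ext (funext fun t => ?_) (funext fun t => ?_)
      · rw [cycleRep₂_map_fst R n E p _ t]
        simp [hln, hc1]
      · rw [cycleRep₂_map_snd R n E p _ t]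
    have hmap₁ : ∀ x : Fin n → E, ((cycleRep R n E).map p) x = x := by
      intro x
      funext t
      rw [cycleRep_map_apply R n E p x t, hl, Fin.natCast_self, sub_zero]
    -- h.app v₀ agrees on (Y, Y) and (0, Y)
    have key : h.app v₀ ((Y, Y) : (Fin n → E) × (Fin n → E))
        = h.app v₀ (((0 : Fin n → E), Y) : (Fin n → E) × (Fin n → E)) := by
      have e2 := LinearMap.congr_fun (congrArg ModuleCat.Hom.hom hnat) (((0 : Fin n → E), Y))
      have e3 : h.app v₀ (((cycleRep₂ R n E).map p) ((0 : Fin n → E), Y))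
          = ((cycleRep R n E).map p) (h.app v₀ ((0 : Fin n → E), Y)) := e2
      rw [hmap₂] at e3
      exact e3.trans (hmap₁ _)
    have hsub : h.app v₀ ((Y, (0 : Fin n → E)) : (Fin n → E) × (Fin n → E)) = 0 := by
      have e6 : ((Y, (0 : Fin n → E)) : (Fin n → E) × (Fin n → E))
          = ((Y, Y) : (Fin n → E) × (Fin n → E)) - (((0 : Fin n → E), Y)) := by
        refine Prod.ext ?_ ?_ <;> simp
      rw [e6]; erw [map_sub, key, sub_self]
    have hid : h.app v₀ ((Y, (0 : Fin n → E)) : (Fin n → E) × (Fin n → E)) = Y := by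
      have e4 := LinearMap.congr_fun (congrArg ModuleCat.Hom.hom
        (congrArg (fun (α : cycleRep R n E ⟶ cycleRep R n E) => α.app v₀) hh)) Y
      exact e4
    rw [hid] at hsub
    exact hy (congrFun hsub 0)
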